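/- Let L₁ be a rank-r lattice with det(L₁) ≥ d^{r/2}, and let L₂ be any rank-r lattice. Let U = (u₁,…,u_r) and W = (w₁,…,w_r) be bases of L₁ and L₂ respectively, and let v = Σᵢ uᵢ ⊗ wᵢ = U Wᵀ. Then ‖v‖₂ ≥ √d · λ₁(L₂). -/

import Mathlib

open Matrix MeasureTheory Submodule
open scoped ENNReal

noncomputable def lambdaOne (p : ℝ≥0∞) {n m : Type} [Fintype n] [Fintype m]
    (B : Matrix n m ℝ) : ℝ :=
  sInf {t : ℝ | ∃ x : m → ℤ, B.mulVec (fun j => (x j : ℝ)) ≠ 0 ∧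
    t = ‖(WithLp.equiv p (n → ℝ)).symm (B.mulVec (fun j => (x j : ℝ)))‖}

/-- Trace of a Hermitian real matrix is the sum of its eigenvalues. -/
lemma trace_eq_sum_eig {r : ℕ} {A : Matrix (Fin r) (Fin r) ℝ} (hA : A.IsHermitian) :
    A.trace = ∑ i, hA.eigenvalues i := by
  rw [hA.trace_eq_sum_eigenvalues]
  simp

/-- AM-GM for the eigenvalues of a positive semidefinite matrix. -/
lemma psd_amgm {r : ℕ} (hr : 0 < r) {A : Matrix (Fin r) (Fin r) ℝ} (hA : A.PosSemidef) :
    (r : ℝ) * A.det ^ ((1:ℝ)/r) ≤ A.trace := by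
  have hev : ∀ i, 0 ≤ hA.1.eigenvalues i := hA.eigenvalues_nonneg
  have hdet : A.det = ∏ i, hA.1.eigenvalues i := by
    simpa using hA.1.det_eq_prod_eigenvalues
  have htr : A.trace = ∑ i, hA.1.eigenvalues i := trace_eq_sum_eig hA.1
  have hw : ∑ _i : Fin r, (1:ℝ)/r = 1 := by
    simp [Finset.sum_const]
    field_simp
  have hgm := Real.geom_mean_le_arith_mean_weighted Finset.univ (fun _ => (1:ℝ)/r)
    (fun i => hA.1.eigenvalues i) (fun i _ => by positivity) hw (fun i _ => hev i)
  have hprod : (∏ i, hA.1.eigenvalues i ^ ((1:ℝ)/r)) = A.det ^ ((1:ℝ)/r) := by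
    rw [hdet, ← Real.finset_prod_rpow _ _ (fun i _ => hev i)]
  have hsum : ∑ i, (1:ℝ)/r * hA.1.eigenvalues i = A.trace / r := by
    rw [htr, ← Finset.mul_sum]
    ring
  rw [hprod, hsum] at hgm
  rw [mul_comm]
  exact (le_div_iff₀ (by positivity)).mp hgm

lemma gram_quad {n r : ℕ} (A : Matrix (Fin n) (Fin r) ℝ) (y : Fin r → ℝ) :
    y ⬝ᵥ ((Aᵀ * A) *ᵥ y) = ∑ i, (A *ᵥ y) i ^ 2 := by
  rw [← Matrix.mulVec_mulVec, Matrix.dotProduct_mulVec, Matrix.vecMul_transpose]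
  simp [dotProduct, sq]

lemma mulVec_eq_sum_cols {n r : ℕ} (A : Matrix (Fin n) (Fin r) ℝ) (y : Fin r → ℝ) :
    A *ᵥ y = ∑ j, y j • Aᵀ j := by
  ext i
  simp [Matrix.mulVec, dotProduct, Finset.sum_apply, mul_comm]

lemma mulVec_ne_zero {n r : ℕ} {A : Matrix (Fin n) (Fin r) ℝ}
    (hA : LinearIndependent ℝ A.transpose) {y : Fin r → ℝ} (hy : y ≠ 0) :
    A *ᵥ y ≠ 0 := by
  intro h
  apply hy
  rw [mulVec_eq_sum_cols] at h
  have := Fintype.linearIndependent_iff.mp hA y h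
  funext j; exact this j

lemma gram_posdef {n r : ℕ} {A : Matrix (Fin n) (Fin r) ℝ}
    (hA : LinearIndependent ℝ A.transpose) : (Aᵀ * A).PosDef := by
  refine Matrix.PosDef.of_dotProduct_mulVec_pos
    (by simpa [Matrix.conjTranspose_eq_transpose_of_trivial] using Matrix.isHermitian_conjTranspose_mul_self A) fun y hy => ?_
  have h1 : A *ᵥ y ≠ 0 := mulVec_ne_zero hA hy
  have h2 : star y = y := rfl
  rw [h2, gram_quad]
  have : 0 < ∑ i, (A *ᵥ y) i ^ 2 := by
    rcases Function.ne_iff.mp h1 with ⟨i, hi⟩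
    exact Finset.sum_pos' (fun i _ => sq_nonneg _)
      ⟨i, Finset.mem_univ i, pow_pos (abs_pos.mpr hi) 2 |> fun h => by simpa [sq_abs] using h⟩
  simpa using this

lemma frob_eq_trace {n₁ n₂ r : ℕ} (U : Matrix (Fin n₁) (Fin r) ℝ)
    (W : Matrix (Fin n₂) (Fin r) ℝ) :
    ∑ i, ∑ j, ((U * Wᵀ) i j) ^ 2 = ((Uᵀ * U) * (Wᵀ * W)).trace := by
  have : ((U * Wᵀ) * (U * Wᵀ)ᵀ).trace = ∑ i, ∑ j, ((U * Wᵀ) i j) ^ 2 := by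
    simp only [Matrix.trace, Matrix.diag, Matrix.mul_apply, Matrix.transpose_apply, sq]
  rw [← this, Matrix.transpose_mul, Matrix.transpose_transpose]
  rw [show U * Wᵀ * (W * Uᵀ) = U * (Wᵀ * W) * Uᵀ by simp only [Matrix.mul_assoc]]
  rw [Matrix.trace_mul_cycle, ← Matrix.mul_assoc]

/-- Minkowski's first theorem, in the form: a nonzero integer combination of the columns of an
invertible matrix lies in the box of half-width `|det B| ^ (1/r)`. -/
lemma mink {r : ℕ} (hr : 0 < r) (B : Matrix (Fin r) (Fin r) ℝ) (hB : IsUnit B.det) :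
    ∃ x : Fin r → ℤ, (fun j => (x j : ℝ)) ≠ 0 ∧
      ∀ i, |(B *ᵥ (fun j => (x j : ℝ))) i| ≤ |B.det| ^ ((1:ℝ)/r) := by
  haveI : Nonempty (Fin r) := Fin.pos_iff_nonempty.mp hr
  have hinv := B.invertibleOfIsUnitDet hB
  let e : (Fin r → ℝ) ≃ₗ[ℝ] (Fin r → ℝ) := B.toLinearEquiv' hinv
  let b : Module.Basis (Fin r) ℝ (Fin r → ℝ) := (Pi.basisFun ℝ (Fin r)).map e
  have hbi : ∀ i, b i = B *ᵥ Pi.single i 1 := by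
    intro i
    simp only [b, Module.Basis.map_apply, Pi.basisFun_apply]
    rfl
  set c : ℝ := |B.det| ^ ((1:ℝ)/r) with hc
  have hc0 : 0 ≤ c := Real.rpow_nonneg (abs_nonneg _) _
  set s : Set (Fin r → ℝ) := Set.univ.pi (fun _ => Set.Icc (-c) c) with hs
  have h_symm : ∀ y ∈ s, -y ∈ s := by
    intro y hy i _
    have := hy i (Set.mem_univ i)
    simp only [Set.mem_Icc] at this ⊢
    constructor <;> simp only [Pi.neg_apply] <;> linarith [this.1, this.2]
  have h_conv : Convex ℝ s := convex_pi (fun i _ => convex_Icc _ _)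
  have h_cpt : IsCompact s := isCompact_univ_pi (fun i => isCompact_Icc)
  have fund := ZSpan.isAddFundamentalDomain' b volume
  haveI : Countable (span ℤ (Set.range b)).toAddSubgroup := by
    change Countable (span ℤ (Set.range b)); infer_instance
  have hvolF : volume (ZSpan.fundamentalDomain b) = ENNReal.ofReal |B.det| := by
    rw [ZSpan.volume_fundamentalDomain]
    congr 1
    rw [show (Matrix.of ⇑b) = Bᵀ by
      ext i j
      simp only [Matrix.of_apply, Matrix.transpose_apply]
      rw [hbi i]
      simp [Matrix.mulVec_single]]
    rw [Matrix.det_transpose]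
  have hvols : volume s = ENNReal.ofReal ((2*c)^r) := by
    rw [hs, volume_pi, Measure.pi_pi]
    simp only [Real.volume_Icc]
    rw [Finset.prod_const, show c - -c = 2*c by ring, ← ENNReal.ofReal_pow (by linarith)]
    simp
  have hineq : volume (ZSpan.fundamentalDomain b) * 2 ^ Module.finrank ℝ (Fin r → ℝ)
      ≤ volume s := by
    rw [hvolF, hvols]
    have hcr : c ^ r = |B.det| := by
      rw [hc, ← Real.rpow_natCast (|B.det| ^ ((1:ℝ)/r)) r, ← Real.rpow_mul (abs_nonneg _)]
      rw [one_div, inv_mul_cancel₀ (by exact_mod_cast hr.ne')]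
      exact Real.rpow_one _
    have : (2*c)^r = 2^r * |B.det| := by rw [mul_pow, hcr]
    rw [this, ENNReal.ofReal_mul (by positivity), ENNReal.ofReal_pow (by norm_num)]
    simp only [Module.finrank_fintype_fun_eq_card, Fintype.card_fin]
    rw [mul_comm]
    simp
  obtain ⟨v, hv0, hvs⟩ :=
    exists_ne_zero_mem_lattice_of_measure_mul_two_pow_le_measure fund h_symm h_conv h_cpt hineq
  have hvmem : (v : Fin r → ℝ) ∈ span ℤ (Set.range b) := SetLike.coe_mem v
  rw [mem_span_range_iff_exists_fun ℤ] at hvmem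
  obtain ⟨x, hx⟩ := hvmem
  have hvx : (v : Fin r → ℝ) = B *ᵥ (fun j => (x j : ℝ)) := by
    rw [← hx]
    rw [show (B *ᵥ (fun j => (x j : ℝ))) = ∑ j, (x j : ℝ) • (B *ᵥ Pi.single j 1) by
      ext i
      simp [Matrix.mulVec_single, Matrix.mulVec, dotProduct, Finset.sum_apply, mul_comm]]
    congr 1
    funext j
    rw [hbi j]
    exact (Int.cast_smul_eq_zsmul ℝ (x j) _).symm
  refine ⟨x, ?_, ?_⟩
  · intro h
    apply hv0
    have : (v : Fin r → ℝ) = 0 := by rw [hvx, h, Matrix.mulVec_zero]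
    exact_mod_cast Subtype.ext this
  · intro i
    have := hvs i (Set.mem_univ i)
    rw [hvx] at this
    simpa [abs_le] using Set.mem_Icc.mp this

theorem frobenius_ge_of_large_det {n₁ n₂ r : ℕ} (d : ℝ) (hd : 0 ≤ d)
    (U : Matrix (Fin n₁) (Fin r) ℝ) (W : Matrix (Fin n₂) (Fin r) ℝ)
    (hU : LinearIndependent ℝ U.transpose) (hW : LinearIndependent ℝ W.transpose)
    (hdet : d ^ ((r : ℝ) / 2) ≤ Real.sqrt ((Uᵀ * U).det)) :
    Real.sqrt d * lambdaOne 2 W ≤ Real.sqrt (∑ i, ∑ j, ((U * Wᵀ) i j) ^ 2) := by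
  rcases Nat.eq_zero_or_pos r with hr0 | hr
  · subst hr0
    have hset : {t : ℝ | ∃ x : Fin 0 → ℤ, W.mulVec (fun j => (x j : ℝ)) ≠ 0 ∧
        t = ‖(WithLp.equiv 2 (Fin n₂ → ℝ)).symm (W.mulVec (fun j => (x j : ℝ)))‖} = ∅ := by
      ext t
      simp [Matrix.mulVec_empty]
    rw [lambdaOne, hset, Real.sInf_empty, mul_zero]
    exact Real.sqrt_nonneg _
  -- notation
  set G := Uᵀ * U with hGdef
  set H := Wᵀ * W with hHdef
  have hG : G.PosDef := gram_posdef hU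
  have hH : H.PosDef := gram_posdef hW
  open scoped MatrixOrder in
  set B := CFC.sqrt H with hBdef
  open scoped MatrixOrder in
  have hBpsd : B.PosSemidef := (CFC.sqrt_nonneg H).posSemidef
  open scoped MatrixOrder in
  have hBB : B * B = H := CFC.sqrt_mul_sqrt_self H hH.posSemidef.nonneg
  have hBt : Bᵀ = B := by
    have := hBpsd.1
    rwa [Matrix.IsHermitian, Matrix.conjTranspose_eq_transpose_of_trivial] at this
  have hBdet2 : B.det * B.det = H.det := by rw [← Matrix.det_mul, hBB]
  have hHdetpos : 0 < H.det := hH.det_pos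
  have hGdetpos : 0 < G.det := hG.det_pos
  have hBdetne : B.det ≠ 0 := by
    intro h; rw [h, mul_zero] at hBdet2; exact hHdetpos.ne hBdet2
  have habs2 : |B.det| ^ 2 = H.det := by rw [sq_abs, sq, hBdet2]
  -- Minkowski: short vector
  obtain ⟨x, hx0, hxb⟩ := mink hr B (isUnit_iff_ne_zero.mpr hBdetne)
  set xr : Fin r → ℝ := fun j => (x j : ℝ) with hxr
  -- the squared norm of W x
  have hWx2 : ∑ i, (W *ᵥ xr) i ^ 2 = ∑ i, (B *ᵥ xr) i ^ 2 := by
    rw [← gram_quad W xr, ← gram_quad B xr, ← hHdef, hBt, hBB]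
  have hBx_le : ∑ i, (B *ᵥ xr) i ^ 2 ≤ (r : ℝ) * H.det ^ ((1:ℝ)/r) := by
    have hc2 : (|B.det| ^ ((1:ℝ)/r)) ^ 2 = H.det ^ ((1:ℝ)/r) := by
      rw [← Real.rpow_natCast (|B.det| ^ ((1:ℝ)/r)) 2, ← Real.rpow_mul (abs_nonneg _),
        mul_comm, Real.rpow_mul (abs_nonneg _), Real.rpow_natCast, habs2]
    calc ∑ i, (B *ᵥ xr) i ^ 2 ≤ ∑ _i : Fin r, (|B.det| ^ ((1:ℝ)/r)) ^ 2 := by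
          refine Finset.sum_le_sum fun i _ => ?_
          have := hxb i
          calc (B *ᵥ xr) i ^ 2 = |(B *ᵥ xr) i| ^ 2 := (sq_abs _).symm
            _ ≤ (|B.det| ^ ((1:ℝ)/r)) ^ 2 :=
                pow_le_pow_left₀ (abs_nonneg _) this 2
      _ = (r : ℝ) * H.det ^ ((1:ℝ)/r) := by
          rw [Finset.sum_const, hc2]; simp [nsmul_eq_mul]
  -- lambdaOne bound
  have hWxne : W *ᵥ xr ≠ 0 := mulVec_ne_zero hW hx0
  set S := {t : ℝ | ∃ y : Fin r → ℤ, W.mulVec (fun j => (y j : ℝ)) ≠ 0 ∧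
    t = ‖(WithLp.equiv 2 (Fin n₂ → ℝ)).symm (W.mulVec (fun j => (y j : ℝ)))‖} with hS
  have hSbdd : ∀ t ∈ S, (0:ℝ) ≤ t := by
    rintro t ⟨y, hy, rfl⟩; exact norm_nonneg _
  have hmem : ‖(WithLp.equiv 2 (Fin n₂ → ℝ)).symm (W *ᵥ xr)‖ ∈ S := ⟨x, hWxne, rfl⟩
  have hlam_le : lambdaOne 2 W ≤ ‖(WithLp.equiv 2 (Fin n₂ → ℝ)).symm (W *ᵥ xr)‖ :=
    csInf_le ⟨0, hSbdd⟩ hmem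
  have hlam_nonneg : 0 ≤ lambdaOne 2 W := Real.sInf_nonneg hSbdd
  have hnorm_eq : ‖(WithLp.equiv 2 (Fin n₂ → ℝ)).symm (W *ᵥ xr)‖
      = Real.sqrt (∑ i, (W *ᵥ xr) i ^ 2) := by
    rw [EuclideanSpace.norm_eq]
    congr 1
    refine Finset.sum_congr rfl fun i _ => ?_
    rw [Real.norm_eq_abs, sq_abs]
    rfl
  -- lambdaOne squared bound
  have hlam2 : (lambdaOne 2 W) ^ 2 ≤ (r : ℝ) * H.det ^ ((1:ℝ)/r) := by
    have h1 : (lambdaOne 2 W) ^ 2 ≤ ∑ i, (W *ᵥ xr) i ^ 2 := by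
      have := pow_le_pow_left₀ hlam_nonneg hlam_le 2
      rwa [hnorm_eq, Real.sq_sqrt (Finset.sum_nonneg fun i _ => sq_nonneg _)] at this
    calc _ ≤ ∑ i, (W *ᵥ xr) i ^ 2 := h1
      _ = ∑ i, (B *ᵥ xr) i ^ 2 := hWx2
      _ ≤ _ := hBx_le
  -- trace inequality
  have htrace : (r : ℝ) * (G.det * H.det) ^ ((1:ℝ)/r) ≤ (G * H).trace := by
    have hpsd : (B * G * B).PosSemidef := by
      have := hG.posSemidef.conjTranspose_mul_mul_same B
      rwa [Matrix.conjTranspose_eq_transpose_of_trivial, hBt] at this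
    have hdet : (B * G * B).det = G.det * H.det := by
      rw [Matrix.det_mul, Matrix.det_mul, ← hBdet2]; ring
    have htr : (B * G * B).trace = (G * H).trace := by
      rw [Matrix.trace_mul_cycle, ← Matrix.mul_assoc, Matrix.mul_assoc, hBB, Matrix.trace_mul_comm]
    have := psd_amgm hr hpsd
    rwa [hdet, htr] at this
  -- d ≤ G.det^(1/r)
  have hdG : d ≤ G.det ^ ((1:ℝ)/r) := by
    have hdr : d ^ (r : ℝ) ≤ G.det := by
      have h1 := pow_le_pow_left₀ (Real.rpow_nonneg hd _) hdet 2
      rwa [Real.sq_sqrt hGdetpos.le, ← Real.rpow_natCast (d ^ ((r:ℝ)/2)) 2,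
        ← Real.rpow_mul hd, show ((r:ℝ)/2 * ((2:ℕ):ℝ)) = (r:ℝ) by push_cast; ring] at h1
    calc d = (d ^ (r:ℝ)) ^ ((1:ℝ)/r) := by
          rw [← Real.rpow_mul hd, mul_one_div, div_self (by exact_mod_cast hr.ne'),
            Real.rpow_one]
      _ ≤ G.det ^ ((1:ℝ)/r) :=
          Real.rpow_le_rpow (Real.rpow_nonneg hd _) hdr (by positivity)
  -- final chain
  have hmain : d * (lambdaOne 2 W) ^ 2 ≤ ∑ i, ∑ j, ((U * Wᵀ) i j) ^ 2 := by
    have hHr : (0:ℝ) ≤ (r : ℝ) * H.det ^ ((1:ℝ)/r) := by positivity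
    calc d * (lambdaOne 2 W) ^ 2 ≤ d * ((r : ℝ) * H.det ^ ((1:ℝ)/r)) :=
          mul_le_mul_of_nonneg_left hlam2 hd
      _ ≤ G.det ^ ((1:ℝ)/r) * ((r : ℝ) * H.det ^ ((1:ℝ)/r)) :=
          mul_le_mul_of_nonneg_right hdG hHr
      _ = (r : ℝ) * (G.det * H.det) ^ ((1:ℝ)/r) := by
          rw [Real.mul_rpow hGdetpos.le hHdetpos.le]; ring
      _ ≤ (G * H).trace := htrace
      _ = ∑ i, ∑ j, ((U * Wᵀ) i j) ^ 2 := (frob_eq_trace U W).symm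
  calc Real.sqrt d * lambdaOne 2 W
      = Real.sqrt (d * (lambdaOne 2 W) ^ 2) := by
        rw [Real.sqrt_mul hd, Real.sqrt_sq hlam_nonneg]
    _ ≤ _ := Real.sqrt_le_sqrt hmain
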